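/- Let Y be a normed vector space, F ≠ Y a nonempty closed convex subset, and C := { y* − inf_{x∈F} y*(x) : y* ∈ S_{Y*} ∩ (−bar(F)) }, so that F = [C]^×. Then for every x̂ ∈ F, T_C(x̂) ⊂ { y* ∈ weak-star closed convex hull of S_{Y*} ∩ (−bar(F)) : y*(x̂) = inf_{x∈F} y*(x) } ⊂ { y* ∈ (R_F)* : y*(x̂) = inf_{x∈F} y*(x) }. If F ≠ Y is a closed convex cone, then F = [C]^× with C = S_{Y*} ∩ F* and T_C(x̂) ⊂ { y* ∈ weak-star closed convex hull of S_{Y*} ∩ F* : y*(x̂) = 0 } ⊂ { y* ∈ F* : y*(x̂) = 0 }. -/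

import Mathlib

open Topology Filter Set

noncomputable section

section Defs

variable {E : Type*} [AddCommGroup E] [Module ℝ E] [TopologicalSpace E]

/-- The canonical map from the topological dual of `E` to the weak-star dual. -/
def toWD (φ : E →L[ℝ] ℝ) : WeakDual ℝ E := φ

/-- The weak-star closed convex hull of a set of continuous linear functionals. -/
def wcch (B : Set (E →L[ℝ] ℝ)) : Set (WeakDual ℝ E) :=
  closure (convexHull ℝ (toWD '' B))

/-- `f` is Gateaux differentiable at `x` with Gateaux-differential `f'`. -/
def HasGateauxAt (f : E → ℝ) (f' : E →L[ℝ] ℝ) (x : E) : Prop :=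
  ∀ v : E, Tendsto (fun t : ℝ => (f (x + t • v) - f x - t * f' v) / t) (𝓝[>] 0) (𝓝 0)

/-- The family `C` is equi-Gateaux differentiable at `x`, with differentials given by `D`. -/
def EquiGateauxAt (C : Set (E → ℝ)) (D : (E → ℝ) → E →L[ℝ] ℝ) (x : E) : Prop :=
  (∀ φ ∈ C, HasGateauxAt φ (D φ) x) ∧
  ∀ v : E, ∀ ε : ℝ, 0 < ε → ∃ δ : ℝ, 0 < δ ∧ ∀ t : ℝ, 0 < t → t < δ →
    ∀ φ ∈ C, |(φ (x + t • v) - φ x - t * (D φ) v) / t| ≤ ε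

/-- The family `C` is equi-lower semicontinuous at `x`. -/
def EquiLscAt (C : Set (E → ℝ)) (x : E) : Prop :=
  ∀ ε : ℝ, 0 < ε → ∃ O ∈ 𝓝 x, ∀ y ∈ O, ∀ φ ∈ C, φ y - φ x > -ε

/-- `[C]^× = {x ∈ E : φ(x) ≥ 0 for all φ ∈ C}`. -/
def polarSet (C : Set (E → ℝ)) : Set E := {x | ∀ φ ∈ C, 0 ≤ φ x}

/-- The multiplier set `T_C(x̂)`. -/
def multSet (C : Set (E → ℝ)) (D : (E → ℝ) → E →L[ℝ] ℝ) (x : E) : Set (WeakDual ℝ E) :=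
  ⋂ n ∈ {n : ℕ | 1 ≤ n}, wcch (D '' {φ | φ ∈ C ∧ φ x ∈ Icc (0:ℝ) (1/(n:ℝ))})

/-- `F` is weak-admissible at `x ∈ F`, determined by `C` (with differentials `D`). -/
def WeakAdmissibleAt (F : Set E) (C : Set (E → ℝ)) (D : (E → ℝ) → E →L[ℝ] ℝ) (x : E) : Prop :=
  x ∈ F ∧ C.Nonempty ∧ F = polarSet C ∧ EquiGateauxAt C D x ∧
    ({φ | φ ∈ C ∧ φ x ≠ 0} = ∅ ∨ EquiLscAt {φ | φ ∈ C ∧ φ x ≠ 0} x) ∧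
    IsCompact (wcch (D '' C))

end Defs

section NormedDefs

variable {Y : Type*} [NormedAddCommGroup Y] [NormedSpace ℝ Y]

/-- `A` is admissible at `x ∈ A`, determined by `C` (with differentials `D`). -/
def AdmissibleAt (A : Set Y) (C : Set (Y → ℝ)) (D : (Y → ℝ) → Y →L[ℝ] ℝ) (x : Y) : Prop :=
  x ∈ A ∧ C.Nonempty ∧ A = polarSet C ∧ EquiGateauxAt C D x ∧
    (∃ r : NNReal, ∃ ε : ℝ, 0 < ε ∧ ∀ φ ∈ C, LipschitzOnWith r φ (Metric.ball x ε)) ∧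
    toWD (0 : Y →L[ℝ] ℝ) ∉ wcch (D '' C)

/-- The recession cone of a set. -/
def recCone (K : Set Y) : Set Y := {v | ∀ l : ℝ, 0 < l → ∀ x ∈ K, x + l • v ∈ K}

/-- The barrier cone of `K`: functionals bounded above on `K`. -/
def barCone (K : Set Y) : Set (Y →L[ℝ] ℝ) := {φ | BddAbove (φ '' K)}

/-- The dual positive cone `A*`. -/
def posDualCone (A : Set Y) : Set (Y →L[ℝ] ℝ) := {φ | ∀ y ∈ A, 0 ≤ φ y}

end NormedDefs

section Helpers

variable {Y : Type*} [NormedAddCommGroup Y] [NormedSpace ℝ Y]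

lemma wcch_mono {S T : Set (Y →L[ℝ] ℝ)} (h : S ⊆ T) : wcch S ⊆ wcch T :=
  closure_mono (convexHull_mono (Set.image_mono h))

lemma wcch_halfspace_le {S : Set (Y →L[ℝ] ℝ)} {v : Y} {c : ℝ}
    (h : ∀ φ ∈ S, c ≤ φ v) {q : WeakDual ℝ Y} (hq : q ∈ wcch S) : c ≤ q v := by
  have hclT : IsClosed {q : WeakDual ℝ Y | c ≤ q v} :=
    isClosed_le continuous_const (WeakDual.eval_continuous v)
  have hcvT : Convex ℝ {q : WeakDual ℝ Y | c ≤ q v} := by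
    intro p hp r hr a b ha hb hab
    have he : (a • p + b • r) v = a * p v + b * r v := rfl
    have h3 : a * c + b * c = c := by rw [← add_mul, hab, one_mul]
    simp only [Set.mem_setOf_eq, he]
    nlinarith [mul_le_mul_of_nonneg_left hp ha, mul_le_mul_of_nonneg_left hr hb]
  have hsub : toWD '' S ⊆ {q : WeakDual ℝ Y | c ≤ q v} := by
    rintro _ ⟨φ, hφ, rfl⟩; exact h φ hφ
  exact hclT.closure_subset_iff.mpr (convexHull_min hsub hcvT) hq

lemma wcch_halfspace_ge {S : Set (Y →L[ℝ] ℝ)} {v : Y} {c : ℝ}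
    (h : ∀ φ ∈ S, φ v ≤ c) {q : WeakDual ℝ Y} (hq : q ∈ wcch S) : q v ≤ c := by
  have hclT : IsClosed {q : WeakDual ℝ Y | q v ≤ c} :=
    isClosed_le (WeakDual.eval_continuous v) continuous_const
  have hcvT : Convex ℝ {q : WeakDual ℝ Y | q v ≤ c} := by
    intro p hp r hr a b ha hb hab
    have he : (a • p + b • r) v = a * p v + b * r v := rfl
    have h3 : a * c + b * c = c := by rw [← add_mul, hab, one_mul]
    simp only [Set.mem_setOf_eq, he]
    nlinarith [mul_le_mul_of_nonneg_left hp ha, mul_le_mul_of_nonneg_left hr hb]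
  have hsub : toWD '' S ⊆ {q : WeakDual ℝ Y | q v ≤ c} := by
    rintro _ ⟨φ, hφ, rfl⟩; exact h φ hφ
  exact hclT.closure_subset_iff.mpr (convexHull_min hsub hcvT) hq

lemma bddBelow_of_neg_barCone {F : Set Y} {φ : Y →L[ℝ] ℝ} (h : -φ ∈ barCone F) :
    BddBelow (φ '' F) := by
  obtain ⟨M, hM⟩ := h
  refine ⟨-M, ?_⟩
  rintro _ ⟨y, hy, rfl⟩
  have h1 : (-φ) y ≤ M := hM (Set.mem_image_of_mem _ hy)
  simp only [ContinuousLinearMap.neg_apply] at h1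
  linarith

end Helpers

/-- For a nonempty closed convex `F ≠ Y` determined by
`C = {y* − inf_F y* : y* ∈ S_{Y*} ∩ (−bar(F))}` one has `F = [C]^×` and, for every `xh ∈ F`,
`T_C(xh) ⊆ {y* ∈ w*cch(S_{Y*} ∩ (−bar F)) : y*(xh) = inf_F y*} ⊆
{y* ∈ (R_F)* : y*(xh) = inf_F y*}`; and for a closed convex cone `F ≠ Y`, `F = [S_{Y*} ∩ F*]^×`
with `T_C(xh) ⊆ {y* ∈ w*cch(S_{Y*} ∩ F*) : y*(xh) = 0} ⊆ {y* ∈ F* : y*(xh) = 0}`. -/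
theorem multSet_closed_convex_subset
    {Y : Type*} [NormedAddCommGroup Y] [NormedSpace ℝ Y]
    (F : Set Y) (hne : F.Nonempty) (hcl : IsClosed F) (hconv : Convex ℝ F)
    (hF : F ≠ Set.univ) (xh : Y) (hx : xh ∈ F) :
    (F = polarSet ((fun φ : Y →L[ℝ] ℝ => fun y => φ y - sInf (φ '' F)) ''
        {φ : Y →L[ℝ] ℝ | ‖φ‖ = 1 ∧ -φ ∈ barCone F})) ∧
    ((⋂ n ∈ {n : ℕ | 1 ≤ n}, wcch {φ : Y →L[ℝ] ℝ | ‖φ‖ = 1 ∧ -φ ∈ barCone F ∧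
          φ xh - sInf (φ '' F) ∈ Icc (0:ℝ) (1/(n:ℝ))})
      ⊆ {q : WeakDual ℝ Y | q ∈ wcch {φ : Y →L[ℝ] ℝ | ‖φ‖ = 1 ∧ -φ ∈ barCone F} ∧
          q xh = sInf (⇑q '' F)}) ∧
    ({q : WeakDual ℝ Y | q ∈ wcch {φ : Y →L[ℝ] ℝ | ‖φ‖ = 1 ∧ -φ ∈ barCone F} ∧
          q xh = sInf (⇑q '' F)}
      ⊆ {q : WeakDual ℝ Y | (∀ v ∈ recCone F, 0 ≤ q v) ∧ q xh = sInf (⇑q '' F)}) ∧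
    ((∀ c : ℝ, 0 < c → ∀ x ∈ F, c • x ∈ F) →
      (F = polarSet ((fun φ : Y →L[ℝ] ℝ => (φ : Y → ℝ)) ''
          {φ : Y →L[ℝ] ℝ | ‖φ‖ = 1 ∧ φ ∈ posDualCone F})) ∧
      ((⋂ n ∈ {n : ℕ | 1 ≤ n}, wcch {φ : Y →L[ℝ] ℝ | ‖φ‖ = 1 ∧ φ ∈ posDualCone F ∧
            φ xh ∈ Icc (0:ℝ) (1/(n:ℝ))})
        ⊆ {q : WeakDual ℝ Y | q ∈ wcch {φ : Y →L[ℝ] ℝ | ‖φ‖ = 1 ∧ φ ∈ posDualCone F} ∧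
            q xh = 0}) ∧
      ({q : WeakDual ℝ Y | q ∈ wcch {φ : Y →L[ℝ] ℝ | ‖φ‖ = 1 ∧ φ ∈ posDualCone F} ∧
            q xh = 0}
        ⊆ {q : WeakDual ℝ Y | (∀ y ∈ F, 0 ≤ q y) ∧ q xh = 0})) := by
  have hbdd : ∀ φ : Y →L[ℝ] ℝ, -φ ∈ barCone F → BddBelow (φ '' F) :=
    fun φ h => bddBelow_of_neg_barCone h
  refine ⟨?_, ?_, ?_, ?_⟩
  · -- Part 1 : F = polarSet C
    ext x
    constructor
    · rintro hxF _ ⟨φ, ⟨hnorm, hbar⟩, rfl⟩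
      have h1 : sInf (φ '' F) ≤ φ x := csInf_le (hbdd φ hbar) (Set.mem_image_of_mem φ hxF)
      simp only [sub_nonneg]
      exact h1
    · intro hmem
      by_contra hxF
      obtain ⟨f, u, hfx, hfF⟩ := geometric_hahn_banach_point_closed hconv hcl hxF
      obtain ⟨y0, hy0⟩ := hne
      have hfne : f ≠ 0 := by
        intro h0
        rw [h0] at hfx
        have := hfF y0 hy0
        rw [h0] at this
        simp at hfx this
        linarith
      have hnf : (0:ℝ) < ‖f‖ := norm_pos_iff.mpr hfne
      set g : Y →L[ℝ] ℝ := ‖f‖⁻¹ • f with hg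
      have hgnorm : ‖g‖ = 1 := by
        rw [hg, norm_smul ‖f‖⁻¹ f, norm_inv, norm_norm]
        field_simp
      have hgeval : ∀ y : Y, g y = ‖f‖⁻¹ * f y := fun y => rfl
      have hgF : ∀ y ∈ F, ‖f‖⁻¹ * u ≤ g y := by
        intro y hy
        rw [hgeval]
        exact mul_le_mul_of_nonneg_left (hfF y hy).le (inv_nonneg.mpr hnf.le)
      have hbarg : -g ∈ barCone F := by
        refine ⟨-(‖f‖⁻¹ * u), ?_⟩
        rintro _ ⟨y, hy, rfl⟩
        simp only [ContinuousLinearMap.neg_apply]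
        linarith [hgF y hy]
      have h0 := hmem _ ⟨g, ⟨hgnorm, hbarg⟩, rfl⟩
      have hlb : ‖f‖⁻¹ * u ≤ sInf (g '' F) :=
        le_csInf ((Set.Nonempty.image _ ⟨y0, hy0⟩)) (by rintro _ ⟨y, hy, rfl⟩; exact hgF y hy)
      have hgx : g x < ‖f‖⁻¹ * u := by
        rw [hgeval]
        exact (mul_lt_mul_iff_right₀ (inv_pos.mpr hnf)).mpr hfx
      simp only [sub_nonneg] at h0
      linarith
  · -- Part 2
    intro q hq
    rw [Set.mem_iInter₂] at hq
    have hone : (1:ℕ) ∈ {n : ℕ | 1 ≤ n} := by simp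
    constructor
    · refine wcch_mono ?_ (hq 1 hone)
      intro φ hφ
      exact ⟨hφ.1, hφ.2.1⟩
    · have key : ∀ x ∈ F, q xh ≤ q x := by
        intro x hxF
        have hn : ∀ n : ℕ, 1 ≤ n → -(1/(n:ℝ)) ≤ q (x - xh) := by
          intro n hn1
          refine wcch_halfspace_le ?_ (hq n hn1)
          rintro φ ⟨hnorm, hbar, hIcc⟩
          rw [Set.mem_Icc] at hIcc
          have h1 : sInf (φ '' F) ≤ φ x := csInf_le (hbdd φ hbar) (Set.mem_image_of_mem φ hxF)
          have h2 : φ (x - xh) = φ x - φ xh := map_sub φ x xh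
          rw [h2]
          linarith [hIcc.2]
        have h0 : 0 ≤ q (x - xh) := by
          by_contra hcon
          push_neg at hcon
          obtain ⟨n, hlt⟩ := exists_nat_one_div_lt (show (0:ℝ) < -q (x - xh) by linarith)
          have := hn (n + 1) (by omega)
          push_cast at this hlt
          linarith
        have h2 : q (x - xh) = q x - q xh := map_sub q x xh
        linarith [h2 ▸ h0]
      refine (IsLeast.csInf_eq ⟨Set.mem_image_of_mem _ hx, ?_⟩).symm
      rintro _ ⟨y, hy, rfl⟩
      exact key y hy
  · -- Part 3
    rintro q ⟨hq, hqx⟩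
    refine ⟨fun v hv => ?_, hqx⟩
    refine wcch_halfspace_le ?_ hq
    rintro φ ⟨hnorm, M, hM⟩
    by_contra hneg
    push_neg at hneg
    have hφxh : -M ≤ φ xh := by
      have h1 : (-φ) xh ≤ M := hM (Set.mem_image_of_mem _ hx)
      simp only [ContinuousLinearMap.neg_apply] at h1
      linarith
    set l : ℝ := (φ xh + M + 1) / (-φ v) with hldef
    have hl : 0 < l := div_pos (by linarith) (by linarith)
    have hmemF := hv l hl xh hx
    have hub : (-φ) (xh + l • v) ≤ M := hM (Set.mem_image_of_mem _ hmemF)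
    simp only [ContinuousLinearMap.neg_apply, map_add, map_smul, smul_eq_mul] at hub
    have hcanc : l * -φ v = φ xh + M + 1 := div_mul_cancel₀ _ (by linarith)
    rw [mul_neg] at hcanc
    linarith
  · -- Part 4
    intro hcone
    have h0F : (0:Y) ∈ F := by
      obtain ⟨y0, hy0⟩ := hne
      have ht : Filter.Tendsto (fun n : ℕ => (1/((n:ℝ)+1)) • y0) atTop (𝓝 (0:Y)) := by
        have h1 : Filter.Tendsto (fun n : ℕ => 1/((n:ℝ)+1)) atTop (𝓝 0) := tendsto_one_div_add_atTop_nhds_zero_nat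
        have := h1.smul_const y0
        simpa using this
      exact hcl.mem_of_tendsto ht (Filter.Eventually.of_forall fun n =>
        hcone _ (by positivity) _ hy0)
    refine ⟨?_, ?_, ?_⟩
    · -- 4a
      ext x
      constructor
      · rintro hxF _ ⟨φ, ⟨hnorm, hpos⟩, rfl⟩
        exact hpos x hxF
      · intro hmem
        by_contra hxF
        obtain ⟨f, u, hfx, hfF⟩ := geometric_hahn_banach_point_closed hconv hcl hxF
        have hu0 : u < 0 := by
          have := hfF 0 h0F
          simpa using this
        have hfpos : ∀ y ∈ F, 0 ≤ f y := by
          intro y hy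
          by_contra hneg
          push_neg at hneg
          have hc : 0 < (u - 1) / (f y) := div_pos_of_neg_of_neg (by linarith) hneg
          have h1 := hfF _ (hcone _ hc y hy)
          rw [map_smul, smul_eq_mul, div_mul_cancel₀ _ (ne_of_lt hneg)] at h1
          linarith
        have hfne : f ≠ 0 := by
          intro h0
          rw [h0] at hfx
          simp at hfx
          linarith
        have hnf : (0:ℝ) < ‖f‖ := norm_pos_iff.mpr hfne
        set g : Y →L[ℝ] ℝ := ‖f‖⁻¹ • f with hg
        have hgnorm : ‖g‖ = 1 := by
          rw [hg, norm_smul ‖f‖⁻¹ f, norm_inv, norm_norm]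
          field_simp
        have hgeval : ∀ y : Y, g y = ‖f‖⁻¹ * f y := fun y => rfl
        have hgpos : g ∈ posDualCone F := by
          intro y hy
          rw [hgeval]
          exact mul_nonneg (inv_nonneg.mpr hnf.le) (hfpos y hy)
        have h0 : (0:ℝ) ≤ g x := hmem _ ⟨g, ⟨hgnorm, hgpos⟩, rfl⟩
        rw [hgeval] at h0
        nlinarith [inv_pos.mpr hnf]
    · -- 4b
      intro q hq
      rw [Set.mem_iInter₂] at hq
      have hone : (1:ℕ) ∈ {n : ℕ | 1 ≤ n} := by simp
      have hq1 : q ∈ wcch {φ : Y →L[ℝ] ℝ | ‖φ‖ = 1 ∧ φ ∈ posDualCone F} := by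
        refine wcch_mono ?_ (hq 1 hone)
        intro φ hφ
        exact ⟨hφ.1, hφ.2.1⟩
      refine ⟨hq1, ?_⟩
      have hge : 0 ≤ q xh := by
        refine wcch_halfspace_le ?_ (hq 1 hone)
        rintro φ ⟨hnorm, hpos, hIcc⟩
        exact hIcc.1
      have hle : ∀ n : ℕ, 1 ≤ n → q xh ≤ 1/(n:ℝ) := by
        intro n hn1
        refine wcch_halfspace_ge ?_ (hq n hn1)
        rintro φ ⟨hnorm, hpos, hIcc⟩
        exact hIcc.2
      by_contra hne0
      have hpos : 0 < q xh := lt_of_le_of_ne hge (Ne.symm hne0)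
      obtain ⟨n, hlt⟩ := exists_nat_one_div_lt hpos
      have := hle (n + 1) (by omega)
      push_cast at this hlt
      linarith
    · -- 4c
      rintro q ⟨hq, hqx⟩
      exact ⟨fun y hy => wcch_halfspace_le (fun φ hφ => hφ.2 y hy) hq, hqx⟩
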